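/- Let W be a matrix weight of size N whose zeroth moment M₀ = ∫ W(x) dx equals the identity matrix I. Then every T ∈ Mat_N(ℂ) with T W(x) = W(x) T* for a.e. x is Hermitian (T = T*), and the commutant algebra C = {T ∈ Mat_N(ℂ) : T W(x) = W(x) T for a.e. x} decomposes as C = C_ℝ ⊕ i C_ℝ, where C_ℝ = {T ∈ Mat_N(ℂ) : T W(x) = W(x) T* for a.e. x}. -/

import Mathlib

open MeasureTheory Matrix
open scoped ComplexOrder

noncomputable section

/-- The set of real points strictly between the extended-real endpoints `a` and `b`. -/
def weightSupport (a b : EReal) : Set ℝ := {x : ℝ | a < (x : EReal) ∧ (x : EReal) < b}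

variable {I : Type} [Fintype I] [DecidableEq I]
variable {I' : Type} [Fintype I'] [DecidableEq I']

/-- Entrywise integral of a matrix-valued function over a set. -/
def matIntegral (S : Set ℝ) (F : ℝ → Matrix I I ℂ) : Matrix I I ℂ :=
  Matrix.of fun i j => ∫ x in S, F x i j

/-- `W` is a matrix weight on the (nondegenerate) interval `(a,b)`. -/
def IsMatrixWeight (a b : EReal) (W : ℝ → Matrix I I ℂ) : Prop :=
  a < b ∧
  (∀ x ∈ weightSupport a b, (W x).PosSemidef) ∧
  (∀ᵐ x : ℝ ∂(volume.restrict (weightSupport a b)), (W x).PosDef) ∧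
  (∀ n : ℕ, ∀ i j, IntegrableOn (fun x : ℝ => (x : ℂ) ^ n * W x i j) (weightSupport a b))

/-- Equivalence of matrix weights: `W' = M W M*` for a nonsingular `M`. -/
def WeightEquiv (a b : EReal) (W : ℝ → Matrix I I ℂ) (W' : ℝ → Matrix I' I' ℂ) : Prop :=
  ∃ (M : Matrix I' I ℂ) (M' : Matrix I I' ℂ), M * M' = 1 ∧ M' * M = 1 ∧
    ∀ x ∈ weightSupport a b, W' x = M * W x * Mᴴ

/-- Unitary equivalence of matrix weights. -/
def UnitaryWeightEquiv (a b : EReal) (W : ℝ → Matrix I I ℂ) (W' : ℝ → Matrix I' I' ℂ) : Prop :=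
  ∃ M : Matrix I' I ℂ, M * Mᴴ = 1 ∧ Mᴴ * M = 1 ∧
    ∀ x ∈ weightSupport a b, W' x = M * W x * Mᴴ

/-- `W` reduces: it is equivalent to a direct sum of two matrix weights of smaller size. -/
def Reduces (a b : EReal) (W : ℝ → Matrix I I ℂ) : Prop :=
  ∃ (N₁ N₂ : ℕ) (W₁ : ℝ → Matrix (Fin N₁) (Fin N₁) ℂ) (W₂ : ℝ → Matrix (Fin N₂) (Fin N₂) ℂ),
    0 < N₁ ∧ 0 < N₂ ∧ N₁ + N₂ = Fintype.card I ∧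
    IsMatrixWeight a b W₁ ∧ IsMatrixWeight a b W₂ ∧
    WeightEquiv a b W (fun x => Matrix.fromBlocks (W₁ x) 0 0 (W₂ x))

/-- The real vector space `C_ℝ` of a matrix weight. -/
def CR (a b : EReal) (W : ℝ → Matrix I I ℂ) : Set (Matrix I I ℂ) :=
  {T | ∀ᵐ x ∂(volume.restrict (weightSupport a b)), T * W x = W x * Tᴴ}

/-- Evaluation of a matrix polynomial at a real point. -/
def polyEval (p : Polynomial (Matrix I I ℂ)) (x : ℝ) : Matrix I I ℂ :=
  p.eval ((x : ℂ) • (1 : Matrix I I ℂ))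

/-- A sequence of orthogonal polynomials with respect to `W`:  `Q n` has degree `n` with
nonsingular leading coefficient, and distinct members are orthogonal. -/
def IsOPS (a b : EReal) (W : ℝ → Matrix I I ℂ) (Q : ℕ → Polynomial (Matrix I I ℂ)) : Prop :=
  (∀ n, (Q n).natDegree = n ∧ IsUnit ((Q n).coeff n)) ∧
  ∀ n m, n ≠ m →
    matIntegral (weightSupport a b) (fun x => polyEval (Q n) x * W x * (polyEval (Q m) x)ᴴ) = 0

/-- The sequence of monic orthogonal polynomials with respect to `W`. -/
def IsMonicOPS (a b : EReal) (W : ℝ → Matrix I I ℂ) (P : ℕ → Polynomial (Matrix I I ℂ)) : Prop :=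
  (∀ n, (P n).Monic ∧ (P n).natDegree = n) ∧
  ∀ n m, n ≠ m →
    matIntegral (weightSupport a b) (fun x => polyEval (P n) x * W x * (polyEval (P m) x)ᴴ) = 0

end

lemma measurableSet_weightSupport (a b : EReal) : MeasurableSet (weightSupport a b) := by
  have : weightSupport a b = (fun x : ℝ => (x : EReal)) ⁻¹' Set.Ioo a b := rfl
  rw [this]
  exact (isOpen_Ioo.preimage continuous_coe_real_ereal).measurableSet

lemma CR_hermitian {N : ℕ} (a b : EReal) (W : ℝ → Matrix (Fin N) (Fin N) ℂ)
    (hW : IsMatrixWeight a b W)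
    (hM₀ : matIntegral (weightSupport a b) W = 1)
    {T : Matrix (Fin N) (Fin N) ℂ} (hT : T ∈ CR a b W) : T = Tᴴ := by
  set S := weightSupport a b
  have hint : ∀ i j, IntegrableOn (fun x => W x i j) S := by
    intro i j
    have := hW.2.2.2 0 i j
    simpa using this
  have h2 : matIntegral S (fun x => T * W x) = T * matIntegral S W := by
    ext i j
    simp only [matIntegral, Matrix.of_apply, Matrix.mul_apply]
    rw [integral_finset_sum _ (fun k _ => ((hint k j).const_mul (T i k)))]
    exact Finset.sum_congr rfl fun k _ => integral_const_mul _ _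
  have h3 : matIntegral S (fun x => W x * Tᴴ) = matIntegral S W * Tᴴ := by
    ext i j
    simp only [matIntegral, Matrix.of_apply, Matrix.mul_apply]
    rw [integral_finset_sum _ (fun k _ => ((hint i k).mul_const (Tᴴ k j)))]
    exact Finset.sum_congr rfl fun k _ => integral_mul_const _ _
  have hT' : ∀ᵐ x : ℝ ∂(volume.restrict S), T * W x = W x * Tᴴ := hT
  have h1 : matIntegral S (fun x => T * W x) = matIntegral S (fun x => W x * Tᴴ) := by
    ext i j
    exact integral_congr_ae (hT'.mono fun x hx => by show (T * W x) i j = (W x * Tᴴ) i j; rw [hx])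
  have := h1
  rw [h2, h3, hM₀, mul_one, one_mul] at this
  exact this

/-- If the zeroth moment of the matrix weight `W` is the identity, then every
`T ∈ C_ℝ(W)` is Hermitian, and the commutant algebra
`C = {T : T W(x) = W(x) T a.e.}` decomposes as `C = C_ℝ ⊕ i C_ℝ`. -/
theorem stmt_5 {N : ℕ} (a b : EReal) (W : ℝ → Matrix (Fin N) (Fin N) ℂ)
    (hW : IsMatrixWeight a b W)
    (hM₀ : matIntegral (weightSupport a b) W = 1) :
    (∀ T ∈ CR a b W, T = Tᴴ) ∧
    (∀ T : Matrix (Fin N) (Fin N) ℂ,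
      (∀ᵐ x : ℝ ∂(volume.restrict (weightSupport a b)), T * W x = W x * T) ↔
        ∃ T₁ ∈ CR a b W, ∃ T₂ ∈ CR a b W, T = T₁ + Complex.I • T₂) ∧
    (∀ T₁ ∈ CR a b W, ∀ T₂ ∈ CR a b W, T₁ + Complex.I • T₂ = 0 → T₁ = 0 ∧ T₂ = 0) := by
  have hherm : ∀ T ∈ CR a b W, T = Tᴴ := fun T hT => CR_hermitian a b W hW hM₀ hT
  have haeW : ∀ᵐ x : ℝ ∂(volume.restrict (weightSupport a b)), (W x)ᴴ = W x := by
    filter_upwards [ae_restrict_mem (measurableSet_weightSupport a b)] with x hx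
    exact (hW.2.1 x hx).1
  refine ⟨hherm, ?_, ?_⟩
  · intro T
    constructor
    · intro hT
      have hTH : ∀ᵐ x : ℝ ∂(volume.restrict (weightSupport a b)),
          Tᴴ * W x = W x * Tᴴ := by
        filter_upwards [hT, haeW] with x hx hWx
        calc Tᴴ * W x = Tᴴ * (W x)ᴴ := by rw [hWx]
          _ = (W x * T)ᴴ := by rw [Matrix.conjTranspose_mul]
          _ = (T * W x)ᴴ := by rw [hx]
          _ = (W x)ᴴ * Tᴴ := by rw [Matrix.conjTranspose_mul]
          _ = W x * Tᴴ := by rw [hWx]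
      refine ⟨(1/2 : ℂ) • (T + Tᴴ), ?_, (1/(2*Complex.I) : ℂ) • (T - Tᴴ), ?_, ?_⟩
      · filter_upwards [hT, hTH] with x hx hx'
        have hHerm : ((1/2 : ℂ) • (T + Tᴴ))ᴴ = (1/2 : ℂ) • (T + Tᴴ) := by
          simp [Matrix.conjTranspose_smul, Matrix.conjTranspose_add, add_comm]
        rw [hHerm, Matrix.smul_mul, Matrix.mul_smul, add_mul, mul_add, hx, hx']
      · filter_upwards [hT, hTH] with x hx hx'
        have hHerm : ((1/(2*Complex.I) : ℂ) • (T - Tᴴ))ᴴ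
            = (1/(2*Complex.I) : ℂ) • (T - Tᴴ) := by
          rw [Matrix.conjTranspose_smul, Matrix.conjTranspose_sub,
            Matrix.conjTranspose_conjTranspose]
          rw [show (star (1/(2*Complex.I)) : ℂ) = -(1/(2*Complex.I)) by
            simp [Complex.ext_iff]]
          rw [neg_smul, ← smul_neg, neg_sub]
        rw [hHerm, Matrix.smul_mul, Matrix.mul_smul, sub_mul, mul_sub, hx, hx']
      · have hI : Complex.I • ((1/(2*Complex.I) : ℂ) • (T - Tᴴ))
            = (1/2 : ℂ) • (T - Tᴴ) := by
          rw [smul_smul]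
          congr 1
          field_simp
        rw [hI, ← smul_add]
        rw [show T + Tᴴ + (T - Tᴴ) = (2:ℂ) • T by
          rw [two_smul]; abel]
        rw [smul_smul]
        norm_num
    · rintro ⟨T₁, hT₁, T₂, hT₂, rfl⟩
      have h₁ := hherm T₁ hT₁
      have h₂ := hherm T₂ hT₂
      filter_upwards [hT₁, hT₂] with x hx₁ hx₂
      rw [add_mul, mul_add, Matrix.smul_mul, Matrix.mul_smul, hx₁, hx₂, ← h₁, ← h₂]
  · intro T₁ hT₁ T₂ hT₂ hsum
    have h₁ := hherm T₁ hT₁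
    have h₂ := hherm T₂ hT₂
    have hsumH := congrArg Matrix.conjTranspose hsum
    simp only [Matrix.conjTranspose_add, Matrix.conjTranspose_smul, ← h₁, ← h₂,
      Matrix.conjTranspose_zero, Complex.star_def, Complex.conj_I, neg_smul] at hsumH
    have hT₂0 : T₂ = 0 := by
      have : (2 * Complex.I) • T₂ = 0 := by
        have := sub_eq_zero.mpr (hsum.trans hsumH.symm)
        rw [add_sub_add_left_eq_sub, sub_neg_eq_add, ← two_smul ℂ, smul_smul] at this
        exact this
      have h2I : (2 * Complex.I) ≠ 0 := by simp [Complex.I_ne_zero]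
      simpa [h2I] using smul_eq_zero.mp this
    refine ⟨?_, hT₂0⟩
    rw [hT₂0, smul_zero, add_zero] at hsum
    exact hsum
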